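/- For a ∈ (0,1) and r ∈ (0,1), the generalized elliptic integrals satisfy E_a(r)K_a(r') + E_a(r')K_a(r) - K_a(r)K_a(r') = π sin(π a) / (4(1-a)), where K_a(r) = (π/2)F(a, 1-a; 1; r²), E_a(r) = (π/2)F(a-1, 1-a; 1; r²), and r' = √(1-r²). -/

import Mathlib

open Real Set

/-- The Gaussian hypergeometric function ₂F₁(a,b;c;x) as a power series sum. -/
noncomputable def hyperF (a b c x : ℝ) : ℝ :=
  ∑' n : ℕ, Polynomial.eval a (ascPochhammer ℝ n) * Polynomial.eval b (ascPochhammer ℝ n) /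
      (Polynomial.eval c (ascPochhammer ℝ n) * (n.factorial : ℝ)) * x ^ n

/-- Generalized elliptic integral of the first kind. -/
noncomputable def genK (a r : ℝ) : ℝ := π / 2 * hyperF a (1 - a) 1 (r ^ 2)

/-- Generalized elliptic integral of the second kind. -/
noncomputable def genE (a r : ℝ) : ℝ := π / 2 * hyperF (a - 1) (1 - a) 1 (r ^ 2)

namespace LegAux
open Filter Finset Topology


/-- coefficient of K-series (u) with parameter b = 1-a -/
noncomputable def cu (b : ℝ) (n : ℕ) : ℝ :=
  Polynomial.eval (1-b) (ascPochhammer ℝ n) * Polynomial.eval b (ascPochhammer ℝ n) /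
    ((n.factorial : ℝ) * (n.factorial : ℝ))

/-- coefficient of E-series (v) -/
noncomputable def cv (b : ℝ) (n : ℕ) : ℝ :=
  Polynomial.eval (-b) (ascPochhammer ℝ n) * Polynomial.eval b (ascPochhammer ℝ n) /
    ((n.factorial : ℝ) * (n.factorial : ℝ))

noncomputable def P (b : ℝ) (m : ℕ) : ℝ := ∏ j ∈ Finset.range m, (1 - b^2/((j:ℝ)+1)^2)

lemma P_zero (b : ℝ) : P b 0 = 1 := by simp [P]

lemma P_succ (b : ℝ) (m : ℕ) : P b (m+1) = P b m * (1 - b^2/((m:ℝ)+1)^2) := by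
  simp [P, Finset.prod_range_succ]

lemma cu_zero (b : ℝ) : cu b 0 = 1 := by simp [cu]

lemma cv_zero (b : ℝ) : cv b 0 = 1 := by simp [cv]

lemma cu_rec (b : ℝ) (n : ℕ) :
    cu b (n+1) = cu b n * (((n:ℝ)+1-b) * ((n:ℝ)+b)) / ((n:ℝ)+1)^2 := by
  have hn : ((n:ℝ)+1) ≠ 0 := by positivity
  have hf : ((n.factorial : ℝ)) ≠ 0 := by exact_mod_cast n.factorial_ne_zero
  simp only [cu, ascPochhammer_succ_eval, Nat.factorial_succ, Nat.cast_mul, Nat.cast_add,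
    Nat.cast_one]
  field_simp
  ring

lemma cv_rec (b : ℝ) (n : ℕ) :
    cv b (n+1) = cv b n * (((n:ℝ)-b) * ((n:ℝ)+b)) / ((n:ℝ)+1)^2 := by
  have hn : ((n:ℝ)+1) ≠ 0 := by positivity
  have hf : ((n.factorial : ℝ)) ≠ 0 := by exact_mod_cast n.factorial_ne_zero
  simp only [cv, ascPochhammer_succ_eval, Nat.factorial_succ, Nat.cast_mul, Nat.cast_add,
    Nat.cast_one]
  field_simp
  ring

lemma cu_succ (b : ℝ) (m : ℕ) :
    cu b (m+1) = b * ((m:ℝ)+1-b) * P b m / ((m:ℝ)+1)^2 := by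
  induction m with
  | zero => simp [cu_rec, cu_zero, P_zero]; ring
  | succ k ih =>
      have hk : ((k:ℝ)+1) ≠ 0 := by positivity
      rw [cu_rec, ih, P_succ]
      push_cast
      field_simp
      ring

lemma cv_succ (b : ℝ) (m : ℕ) :
    cv b (m+1) = -(b^2) * P b m / ((m:ℝ)+1)^2 := by
  induction m with
  | zero => simp [cv_rec, cv_zero, P_zero]; ring
  | succ k ih =>
      have hk : ((k:ℝ)+1) ≠ 0 := by positivity
      rw [cv_rec, ih, P_succ]
      push_cast
      field_simp
      ring

section bounds
variable {b : ℝ} (hb0 : 0 < b) (hb1 : b < 1)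

include hb0 hb1

lemma P_pos (m : ℕ) : 0 < P b m := by
  apply Finset.prod_pos
  intro j _
  have h1 : b^2 < 1 := by nlinarith
  have h2 : (1:ℝ) ≤ ((j:ℝ)+1)^2 := by nlinarith [Nat.cast_nonneg (α := ℝ) j]
  have : b^2/((j:ℝ)+1)^2 < 1 := by
    rw [div_lt_one (by positivity)]; linarith
  linarith

lemma P_le_one (m : ℕ) : P b m ≤ 1 := by
  induction m with
  | zero => simp [P_zero]
  | succ k ih =>
      rw [P_succ]
      have hp := P_pos hb0 hb1 k
      have h3 : 0 ≤ b^2/((k:ℝ)+1)^2 := by positivity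
      nlinarith

lemma cu_pos (n : ℕ) : 0 < cu b n := by
  cases n with
  | zero => simp [cu_zero]
  | succ m =>
      rw [cu_succ]
      have := P_pos hb0 hb1 m
      have hm : (0:ℝ) ≤ (m:ℝ) := Nat.cast_nonneg m
      have : 0 < (m:ℝ)+1-b := by linarith
      positivity

lemma baux (m : ℕ) : b*((m:ℝ)+1-b) ≤ (m:ℝ)+1 := by
  have hm : (0:ℝ) ≤ (m:ℝ) := Nat.cast_nonneg m
  nlinarith [mul_nonneg (show (0:ℝ) ≤ (m:ℝ)+1 by linarith) (sub_nonneg.2 hb1.le), sq_nonneg b]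

lemma cu_le_one (n : ℕ) : cu b n ≤ 1 := by
  cases n with
  | zero => simp [cu_zero]
  | succ m =>
      rw [cu_succ]
      have hP1 := P_le_one hb0 hb1 m
      have hP0 := P_pos hb0 hb1 m
      have hm : (0:ℝ) ≤ (m:ℝ) := Nat.cast_nonneg m
      have h1 : 0 < (m:ℝ)+1-b := by linarith
      have h2 : b*((m:ℝ)+1-b)*P b m ≤ b*((m:ℝ)+1-b) := mul_le_of_le_one_right (by positivity) hP1
      have h3 := baux hb0 hb1 (b := b) m
      rw [div_le_one (by positivity)]
      nlinarith [sq_nonneg ((m:ℝ)+1), mul_nonneg hm (show (0:ℝ) ≤ (m:ℝ)+1 by linarith)]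

lemma cu_succ_le (m : ℕ) : cu b (m+1) ≤ 1/((m:ℝ)+1) := by
  rw [cu_succ]
  have hP1 := P_le_one hb0 hb1 m
  have hP0 := P_pos hb0 hb1 m
  have hm : (0:ℝ) ≤ (m:ℝ) := Nat.cast_nonneg m
  have h1 : 0 < (m:ℝ)+1-b := by linarith
  have h2 : b*((m:ℝ)+1-b)*P b m ≤ b*((m:ℝ)+1-b) := mul_le_of_le_one_right (by positivity) hP1
  have h3 := baux hb0 hb1 (b := b) m
  rw [div_le_div_iff₀ (by positivity) (by positivity)]
  nlinarith [mul_nonneg (mul_nonneg hb0.le h1.le) hm]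

lemma cv_abs_le_one (n : ℕ) : |cv b n| ≤ 1 := by
  cases n with
  | zero => simp [cv_zero]
  | succ m =>
      rw [cv_succ]
      have hP1 := P_le_one hb0 hb1 m
      have hP0 := P_pos hb0 hb1 m
      have hm : (0:ℝ) ≤ (m:ℝ) := Nat.cast_nonneg m
      rw [abs_div, abs_of_nonpos (by nlinarith), abs_of_nonneg (by positivity)]
      rw [div_le_one (by positivity)]
      have : b^2 * P b m ≤ 1 := by nlinarith
      nlinarith [sq_nonneg ((m:ℝ)+1), mul_nonneg (sub_nonneg.2 this) (sq_nonneg ((m:ℝ)+1))]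

lemma cv_succ_abs (m : ℕ) : |cv b (m+1)| ≤ 1/((m:ℝ)+1)^2 := by
  rw [cv_succ]
  have hP1 := P_le_one hb0 hb1 m
  have hP0 := P_pos hb0 hb1 m
  have hm : (0:ℝ) ≤ (m:ℝ) := Nat.cast_nonneg m
  rw [abs_div, abs_of_nonpos (by nlinarith), abs_of_nonneg (by positivity)]
  rw [div_le_div_iff₀ (by positivity) (by positivity)]
  have h4 : b^2 * P b m ≤ 1 := by nlinarith
  nlinarith [mul_nonneg (sub_nonneg.2 h4) (sq_nonneg ((m:ℝ)+1))]

omit hb0 hb1 in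
lemma cu_sub_cv (m : ℕ) : cu b (m+1) - cv b (m+1) = b * P b m / ((m:ℝ)+1) := by
  rw [cu_succ, cv_succ]
  have hm : ((m:ℝ)+1) ≠ 0 := by positivity
  field_simp
  ring

lemma cv_le_cu (n : ℕ) : cv b n ≤ cu b n := by
  cases n with
  | zero => simp [cu_zero, cv_zero]
  | succ m =>
      have h := cu_sub_cv (b := b) m
      have hP0 := P_pos hb0 hb1 m
      have hm : (0:ℝ) ≤ (m:ℝ) := Nat.cast_nonneg m
      have : 0 ≤ b * P b m / ((m:ℝ)+1) := by positivity
      linarith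

lemma cu_sub_cv_le (m : ℕ) : cu b (m+1) - cv b (m+1) ≤ 1 := by
  rw [cu_sub_cv]
  have hP1 := P_le_one hb0 hb1 m
  have hP0 := P_pos hb0 hb1 m
  have hm : (0:ℝ) ≤ (m:ℝ) := Nat.cast_nonneg m
  rw [div_le_one (by positivity)]
  nlinarith

omit hb0 hb1 in
/-- telescoping: partial sums of cv equal P -/
lemma sum_cv (m : ℕ) : ∑ n ∈ Finset.range (m+1), cv b n = P b m := by
  induction m with
  | zero => simp [cv_zero, P_zero]
  | succ k ih =>
      rw [Finset.sum_range_succ, ih, cv_succ, P_succ]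
      have hk : ((k:ℝ)+1) ≠ 0 := by positivity
      field_simp
      ring


end bounds
noncomputable def UU (b x : ℝ) : ℝ := ∑' n, cu b n * x^n
noncomputable def VV (b x : ℝ) : ℝ := ∑' n, cv b n * x^n
noncomputable def DUU (b x : ℝ) : ℝ := ∑' n, cu b n * ((n:ℝ) * x^(n-1))
noncomputable def DVV (b x : ℝ) : ℝ := ∑' n, cv b n * ((n:ℝ) * x^(n-1))

section generic
variable {c : ℕ → ℝ} {x : ℝ}

lemma summable_aux1 (hc : ∀ n, |c n| ≤ 1) (hx : |x| < 1) :
    Summable (fun n => c n * x^n) := by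
  apply Summable.of_norm_bounded (summable_geometric_of_lt_one (abs_nonneg x) hx)
  intro n
  rw [norm_mul, norm_pow, Real.norm_eq_abs, Real.norm_eq_abs]
  calc |c n| * |x|^n ≤ 1 * |x|^n := by
        apply mul_le_mul_of_nonneg_right (hc n) (by positivity)
    _ = |x|^n := one_mul _

lemma summable_nx (hx : |x| < 1) : Summable (fun n : ℕ => (n:ℝ) * |x|^(n-1)) := by
  rw [← summable_nat_add_iff 1]
  have h1 : Summable (fun n : ℕ => (n:ℝ) * |x|^n) := by
    have := summable_pow_mul_geometric_of_norm_lt_one (R := ℝ) 1 (r := |x|)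
      (by rwa [Real.norm_eq_abs, abs_abs])
    simpa using this
  have h2 : Summable (fun n : ℕ => |x|^n) :=
    summable_geometric_of_lt_one (abs_nonneg x) hx
  have := h1.add h2
  apply this.congr
  intro n
  push_cast
  ring

lemma summable_aux2 (hc : ∀ n, |c n| ≤ 1) (hx : |x| < 1) :
    Summable (fun n => c n * ((n:ℝ) * x^(n-1))) := by
  apply Summable.of_norm_bounded (summable_nx hx)
  intro n
  rw [norm_mul, Real.norm_eq_abs, Real.norm_eq_abs, abs_mul, abs_pow]
  rw [Nat.abs_cast]
  calc |c n| * ((n:ℝ) * |x|^(n-1)) ≤ 1 * ((n:ℝ) * |x|^(n-1)) := by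
        apply mul_le_mul_of_nonneg_right (hc n) (by positivity)
    _ = (n:ℝ) * |x|^(n-1) := one_mul _

lemma hasDerivAt_ps (hc : ∀ n, |c n| ≤ 1) (hx : |x| < 1) :
    HasDerivAt (fun y => ∑' n, c n * y^n) (∑' n, c n * ((n:ℝ) * x^(n-1))) x := by
  set ρ : ℝ := (1 + |x|)/2 with hρ
  have hρ0 : 0 < ρ := by positivity
  have hρ1 : ρ < 1 := by rw [hρ]; linarith
  have hxρ : |x| < ρ := by rw [hρ]; linarith [abs_nonneg x]
  have hρρ : |ρ| < 1 := by rwa [abs_of_pos hρ0]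
  apply hasDerivAt_tsum_of_isPreconnected
    (u := fun n : ℕ => (n:ℝ) * ρ^(n-1)) (summable_nx (x := ρ) (by rwa [abs_of_pos hρ0]) |>.congr
      (by intro n; rw [abs_of_pos hρ0]))
    (isOpen_Ioo (a := -ρ) (b := ρ)) (convex_Ioo _ _).isPreconnected
    (fun n y _ => (hasDerivAt_pow n y).const_mul (c n))
    ?_ (y₀ := 0) (by constructor <;> linarith) ?_ (by constructor <;> [linarith [neg_abs_le x]; linarith [le_abs_self x]])
  · intro n y hy
    have hyρ : |y| ≤ ρ := by
      rw [abs_le]; exact ⟨hy.1.le, hy.2.le⟩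
    rw [Real.norm_eq_abs, abs_mul, abs_mul, Nat.abs_cast, abs_pow]
    calc |c n| * ((n:ℝ) * |y|^(n-1)) ≤ 1 * ((n:ℝ) * ρ^(n-1)) := by
          apply mul_le_mul (hc n) ?_ (by positivity) one_pos.le
          exact mul_le_mul_of_nonneg_left (pow_le_pow_left₀ (abs_nonneg y) hyρ _) (Nat.cast_nonneg n)
      _ = (n:ℝ) * ρ^(n-1) := one_mul _
  · apply summable_of_ne_finset_zero (s := {0})
    intro n hn
    simp only [Finset.mem_singleton] at hn
    rw [zero_pow hn, mul_zero]

end generic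

section withb
variable {b x : ℝ}

lemma summable_cu (hb0 : 0 < b) (hb1 : b < 1) (hx : |x| < 1) : Summable (fun n : ℕ => cu b n * x^n) :=
  summable_aux1 (fun n => by rw [abs_of_pos (cu_pos hb0 hb1 n)]; exact cu_le_one hb0 hb1 n) hx

lemma summable_cv (hb0 : 0 < b) (hb1 : b < 1) (hx : |x| < 1) : Summable (fun n : ℕ => cv b n * x^n) :=
  summable_aux1 (cv_abs_le_one hb0 hb1) hx

lemma hs_U (hb0 : 0 < b) (hb1 : b < 1) (hx : |x| < 1) : HasSum (fun n : ℕ => cu b n * x^n) (UU b x) :=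
  (summable_cu hb0 hb1 hx).hasSum

lemma hs_V (hb0 : 0 < b) (hb1 : b < 1) (hx : |x| < 1) : HasSum (fun n : ℕ => cv b n * x^n) (VV b x) :=
  (summable_cv hb0 hb1 hx).hasSum

lemma hs_DU (hb0 : 0 < b) (hb1 : b < 1) (hx : |x| < 1) : HasSum (fun n : ℕ => cu b n * ((n:ℝ) * x^(n-1))) (DUU b x) :=
  (summable_aux2 (fun n => by rw [abs_of_pos (cu_pos hb0 hb1 n)]; exact cu_le_one hb0 hb1 n) hx).hasSum

lemma hs_DV (hb0 : 0 < b) (hb1 : b < 1) (hx : |x| < 1) : HasSum (fun n : ℕ => cv b n * ((n:ℝ) * x^(n-1))) (DVV b x) :=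
  (summable_aux2 (cv_abs_le_one hb0 hb1) hx).hasSum

lemma hasDerivAt_UU (hb0 : 0 < b) (hb1 : b < 1) (hx : |x| < 1) : HasDerivAt (UU b) (DUU b x) x :=
  hasDerivAt_ps (fun n => by rw [abs_of_pos (cu_pos hb0 hb1 n)]; exact cu_le_one hb0 hb1 n) hx

lemma hasDerivAt_VV (hb0 : 0 < b) (hb1 : b < 1) (hx : |x| < 1) : HasDerivAt (VV b) (DVV b x) x :=
  hasDerivAt_ps (cv_abs_le_one hb0 hb1) hx

/-- shift operator -/
def sh (g : ℕ → ℝ) : ℕ → ℝ := fun n => match n with | 0 => 0 | (m+1) => g m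

lemma hs_xDU (hb0 : 0 < b) (hb1 : b < 1) (hx : |x| < 1) : HasSum (fun n : ℕ => (n:ℝ) * cu b n * x^n) (x * DUU b x) := by
  have h := (hs_DU hb0 hb1 hx).mul_left x
  have he : (fun n : ℕ => x * (cu b n * ((n:ℝ) * x^(n-1)))) = fun n : ℕ => (n:ℝ) * cu b n * x^n := by
    funext n
    cases n with
    | zero => simp
    | succ m => simp only [Nat.add_sub_cancel, pow_succ, Nat.cast_add, Nat.cast_one]; ring
  rwa [he] at h

lemma hs_xDV (hb0 : 0 < b) (hb1 : b < 1) (hx : |x| < 1) : HasSum (fun n : ℕ => (n:ℝ) * cv b n * x^n) (x * DVV b x) := by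
  have h := (hs_DV hb0 hb1 hx).mul_left x
  have he : (fun n : ℕ => x * (cv b n * ((n:ℝ) * x^(n-1)))) = fun n : ℕ => (n:ℝ) * cv b n * x^n := by
    funext n
    cases n with
    | zero => simp
    | succ m => simp only [Nat.add_sub_cancel, pow_succ, Nat.cast_add, Nat.cast_one]; ring
  rwa [he] at h

lemma hs_x2DU (hb0 : 0 < b) (hb1 : b < 1) (hx : |x| < 1) :
    HasSum (sh (fun m => (m:ℝ) * cu b m * x^(m+1))) (x^2 * DUU b x) := by
  have h := (hs_xDU hb0 hb1 hx).mul_left x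
  have he : (fun n : ℕ => x * ((n:ℝ) * cu b n * x^n)) =
      fun n : ℕ => sh (fun m => (m:ℝ) * cu b m * x^(m+1)) (n+1) := by
    funext n
    simp only [sh, pow_succ]
    ring
  rw [he] at h
  have := (hasSum_nat_add_iff (f := sh (fun m => (m:ℝ) * cu b m * x^(m+1))) 1).mp h
  simpa [sh, sq, mul_assoc] using this

lemma hs_xU (hb0 : 0 < b) (hb1 : b < 1) (hx : |x| < 1) :
    HasSum (sh (fun m => cu b m * x^(m+1))) (x * UU b x) := by
  have h := (hs_U hb0 hb1 hx).mul_left x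
  have he : (fun n : ℕ => x * (cu b n * x^n)) =
      fun n : ℕ => sh (fun m => cu b m * x^(m+1)) (n+1) := by
    funext n
    simp only [sh, pow_succ]
    ring
  rw [he] at h
  have := (hasSum_nat_add_iff (f := sh (fun m => cu b m * x^(m+1))) 1).mp h
  simpa [sh] using this

/-- coefficient form of the hypergeometric ODE for u -/
lemma coeff_ode (m : ℕ) : ((m:ℝ)+1) * cu b (m+1) - (m:ℝ) * cu b m =
    b * (cv b (m+1) - cu b (m+1) + cu b m) := by
  cases m with
  | zero => rw [cu_succ, cv_succ, cu_zero, P_zero]; push_cast; ring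
  | succ k =>
      have hk : ((k:ℝ)+1) ≠ 0 := by positivity
      have hk2 : ((k:ℝ)+1+1) ≠ 0 := by positivity
      rw [cu_succ, cv_succ, cu_succ, P_succ]
      push_cast
      field_simp
      ring

/-- R1: x * v' = b (v - u) -/
lemma rel1 (hb0 : 0 < b) (hb1 : b < 1) (hx : |x| < 1) : x * DVV b x = b * (VV b x - UU b x) := by
  have h1 := hs_xDV hb0 hb1 hx
  have h2 := ((hs_V hb0 hb1 hx).sub (hs_U hb0 hb1 hx)).mul_left b
  have he : (fun n : ℕ => b * (cv b n * x^n - cu b n * x^n)) =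
      fun n : ℕ => (n:ℝ) * cv b n * x^n := by
    funext n
    cases n with
    | zero => simp [cu_zero, cv_zero]
    | succ m =>
        have hm : ((m:ℝ)+1) ≠ 0 := by positivity
        rw [cu_succ, cv_succ]
        push_cast
        field_simp
        ring
  rw [he] at h2
  exact h1.unique h2

/-- R2: x (1-x) u' = b (v - (1-x) u) -/
lemma rel2 (hb0 : 0 < b) (hb1 : b < 1) (hx : |x| < 1) : x * (1-x) * DUU b x = b * (VV b x - (1-x) * UU b x) := by
  have hL : HasSum (fun n : ℕ => (n:ℝ) * cu b n * x^n - sh (fun m => (m:ℝ) * cu b m * x^(m+1)) n)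
      (x * DUU b x - x^2 * DUU b x) := (hs_xDU hb0 hb1 hx).sub (hs_x2DU hb0 hb1 hx)
  have hR : HasSum (fun n : ℕ => b * ((cv b n * x^n - cu b n * x^n) + sh (fun m => cu b m * x^(m+1)) n))
      (b * ((VV b x - UU b x) + x * UU b x)) :=
    (((hs_V hb0 hb1 hx).sub (hs_U hb0 hb1 hx)).add (hs_xU hb0 hb1 hx)).mul_left b
  have he : (fun n : ℕ => (n:ℝ) * cu b n * x^n - sh (fun m => (m:ℝ) * cu b m * x^(m+1)) n) =
      fun n : ℕ => b * ((cv b n * x^n - cu b n * x^n) + sh (fun m => cu b m * x^(m+1)) n) := by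
    funext n
    cases n with
    | zero => simp [sh, cu_zero, cv_zero]
    | succ m =>
        simp only [sh, pow_succ]
        have := coeff_ode (b := b) m
        push_cast
        linear_combination (x^m*x) * this
  rw [he] at hL
  have := hL.unique hR
  linear_combination this

end withb
section main
variable {b x : ℝ}
noncomputable def Wf (b x : ℝ) : ℝ :=
  VV b x * UU b (1-x) + VV b (1-x) * UU b x - UU b x * UU b (1-x)

lemma abs_lt_one_of_Ioo (hx : x ∈ Ioo (0:ℝ) 1) : |x| < 1 := by
  rw [abs_lt]; exact ⟨by linarith [hx.1], hx.2⟩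

lemma abs_lt_one_of_Ioo' (hx : x ∈ Ioo (0:ℝ) 1) : |1-x| < 1 := by
  rw [abs_lt]; constructor <;> [linarith [hx.2]; linarith [hx.1]]

lemma hasDerivAt_W (hb0 : 0 < b) (hb1 : b < 1) (hx : x ∈ Ioo (0:ℝ) 1) :
    HasDerivAt (Wf b) 0 x := by
  have hx1 : |x| < 1 := abs_lt_one_of_Ioo hx
  have hx2 : |1-x| < 1 := abs_lt_one_of_Ioo' hx
  have hU := hasDerivAt_UU hb0 hb1 hx1
  have hV := hasDerivAt_VV hb0 hb1 hx1
  have hone : HasDerivAt (fun y : ℝ => 1-y) (-1) x := by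
    simpa using (hasDerivAt_id x).const_sub 1
  have hUc : HasDerivAt (fun y => UU b (1-y)) (DUU b (1-x) * (-1)) x :=
    (hasDerivAt_UU hb0 hb1 hx2).comp x hone
  have hVc : HasDerivAt (fun y => VV b (1-y)) (DVV b (1-x) * (-1)) x :=
    (hasDerivAt_VV hb0 hb1 hx2).comp x hone
  have hW := ((hV.mul hUc).add (hVc.mul hU)).sub (hU.mul hUc)
  have hE : DVV b x * UU b (1-x) + VV b x * (DUU b (1-x) * (-1)) +
      (DVV b (1-x) * (-1) * UU b x + VV b (1-x) * DUU b x) -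
      (DUU b x * UU b (1-x) + UU b x * (DUU b (1-x) * (-1))) = 0 := by
    have r1 := rel1 hb0 hb1 hx1
    have r2 := rel2 hb0 hb1 hx1
    have r1' := rel1 hb0 hb1 hx2
    have r2' := rel2 hb0 hb1 hx2
    have hxne : x ≠ 0 := ne_of_gt hx.1
    have h1xne : (1:ℝ) - x ≠ 0 := by have := hx.2; intro h; linarith [h]
    have key : x * (1-x) * (DVV b x * UU b (1-x) + VV b x * (DUU b (1-x) * (-1)) +
        (DVV b (1-x) * (-1) * UU b x + VV b (1-x) * DUU b x) -
        (DUU b x * UU b (1-x) + UU b x * (DUU b (1-x) * (-1)))) = 0 := by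
      have r2'' : (1-x) * (1-(1-x)) * DUU b (1-x) =
          b * (VV b (1-x) - (1-(1-x)) * UU b (1-x)) := r2' 
      linear_combination ((1-x) * UU b (1-x)) * r1 + (VV b (1-x) - UU b (1-x)) * r2 +
        (-(x * UU b x)) * r1' + (UU b x - VV b x) * r2''
    have := mul_ne_zero hxne h1xne
    exact (mul_eq_zero.mp key).resolve_left this
  rw [hE] at hW
  exact hW

lemma W_eq (hb0 : 0 < b) (hb1 : b < 1) :
    ∀ x ∈ Ioo (0:ℝ) 1, ∀ y ∈ Ioo (0:ℝ) 1, Wf b x = Wf b y := by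
  have key : ∀ x ∈ Ioo (0:ℝ) 1, ∀ y ∈ Ioo (0:ℝ) 1, x < y → Wf b x = Wf b y := by
    intro x hx y hy hxy
    have cont : ContinuousOn (Wf b) (Icc x y) := by
      intro z hz
      have hz' : z ∈ Ioo (0:ℝ) 1 := ⟨lt_of_lt_of_le hx.1 hz.1, lt_of_le_of_lt hz.2 hy.2⟩
      exact (hasDerivAt_W hb0 hb1 hz').continuousAt.continuousWithinAt
    obtain ⟨c, _, hc2⟩ := exists_hasDerivAt_eq_slope (Wf b) (fun _ => 0) hxy cont
      (fun z hz => hasDerivAt_W hb0 hb1 ⟨lt_trans hx.1 hz.1, lt_trans hz.2 hy.2⟩)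
    have hyx : y - x ≠ 0 := sub_ne_zero.mpr (ne_of_gt hxy)
    have h0 : (Wf b y - Wf b x) / (y - x) = 0 := hc2.symm
    rcases div_eq_zero_iff.mp h0 with h | h
    · linarith
    · exact absurd h hyx
  intro x hx y hy
  rcases lt_trichotomy x y with h | h | h
  · exact key x hx y hy h
  · rw [h]
  · exact (key y hy x hx h).symm


/-- the limit value -/
noncomputable def Sb (b : ℝ) : ℝ := Real.sin (π * b) / (π * b)

/-- domination sequence for cv -/
noncomputable def dd : ℕ → ℝ := fun n => match n with | 0 => 1 | (m+1) => 1/((m:ℝ)+1)^2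

lemma summable_dd : Summable dd := by
  rw [← summable_nat_add_iff 1]
  have h : Summable (fun n : ℕ => 1/((n:ℝ)+1)^2) := by
    have := Real.summable_one_div_nat_pow.mpr (le_refl 2)
    have h2 := (summable_nat_add_iff (f := fun n : ℕ => 1/(n:ℝ)^2) 1).mpr this
    apply h2.congr
    intro n
    push_cast
    ring
  apply h.congr
  intro n
  rfl

lemma cv_abs_le_dd (hb0 : 0 < b) (hb1 : b < 1) (n : ℕ) : |cv b n| ≤ dd n := by
  cases n with
  | zero => rw [cv_zero]; norm_num [dd]
  | succ m => exact cv_succ_abs hb0 hb1 m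

lemma summable_cv_abs (hb0 : 0 < b) (hb1 : b < 1) : Summable (cv b) := by
  apply Summable.of_norm_bounded summable_dd
  intro n
  rw [Real.norm_eq_abs]
  exact cv_abs_le_dd hb0 hb1 n

lemma hasSum_cv (hb0 : 0 < b) (hb1 : b < 1) : HasSum (cv b) (Sb b) := by
  have hsum := summable_cv_abs hb0 hb1
  have h1 : Tendsto (fun m : ℕ => ∑ n ∈ Finset.range (m+1), cv b n) atTop
      (𝓝 (∑' n, cv b n)) := hsum.hasSum.tendsto_sum_nat.comp (tendsto_add_atTop_nat 1)
  have h1' : Tendsto (fun m : ℕ => π * b * P b m) atTop (𝓝 (π * b * ∑' n, cv b n)) := by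
    apply Tendsto.const_mul
    apply h1.congr
    intro m
    rw [sum_cv]
  have h2 : Tendsto (fun m : ℕ => π * b * P b m) atTop (𝓝 (Real.sin (π * b))) := by
    have := Real.tendsto_euler_sin_prod b
    apply this.congr
    intro m
    rw [P]
  have heq : π * b * ∑' n, cv b n = Real.sin (π * b) := tendsto_nhds_unique h1' h2
  have hπb : π * b ≠ 0 := mul_ne_zero Real.pi_ne_zero (ne_of_gt hb0)
  have : (∑' n, cv b n) = Sb b := by
    rw [Sb, ← heq]
    field_simp
  rw [← this]
  exact hsum.hasSum

lemma tendsto_U0 (hb0 : 0 < b) (hb1 : b < 1) :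
    Tendsto (fun x => UU b x) (𝓝[>] (0:ℝ)) (𝓝 1) := by
  have key : Tendsto (fun x => ∑' n : ℕ, cu b n * x^n) (𝓝[>] (0:ℝ))
      (𝓝 (∑' n : ℕ, if n = 0 then (1:ℝ) else 0)) := by
    apply tendsto_tsum_of_dominated_convergence (bound := fun n : ℕ => (2⁻¹:ℝ)^n)
    · exact summable_geometric_of_lt_one (by norm_num) (by norm_num)
    · intro n
      cases n with
      | zero =>
          have he : (fun x : ℝ => cu b 0 * x ^ 0) = fun _ => (1:ℝ) := by
            funext y; rw [cu_zero, pow_zero, mul_one]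
          rw [he, if_pos rfl]
          exact tendsto_const_nhds
      | succ m =>
          simp only [Nat.succ_ne_zero, if_false]
          have : Tendsto (fun x : ℝ => cu b (m+1) * x^(m+1)) (𝓝 (0:ℝ))
              (𝓝 (cu b (m+1) * 0^(m+1))) := by
            exact (continuous_const.mul (continuous_pow (m+1))).tendsto 0
          rw [zero_pow (Nat.succ_ne_zero m), mul_zero] at this
          exact this.mono_left nhdsWithin_le_nhds
    · filter_upwards [Ioo_mem_nhdsGT_of_mem (show (0:ℝ) ∈ Ico (0:ℝ) 2⁻¹ by norm_num)] with x hx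
      intro n
      rw [Real.norm_eq_abs, abs_mul, abs_pow]
      calc |cu b n| * |x|^n ≤ 1 * (2⁻¹:ℝ)^n := by
            apply mul_le_mul
            · rw [abs_of_pos (cu_pos hb0 hb1 n)]; exact cu_le_one hb0 hb1 n
            · apply pow_le_pow_left₀ (abs_nonneg x)
              rw [abs_of_pos hx.1]; exact hx.2.le
            · positivity
            · norm_num
        _ = (2⁻¹:ℝ)^n := one_mul _
  rw [show (∑' n : ℕ, if n = 0 then (1:ℝ) else 0) = 1 from tsum_ite_eq 0 (fun _ => (1:ℝ))] at key
  exact key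

lemma tendsto_V1 (hb0 : 0 < b) (hb1 : b < 1) :
    Tendsto (fun x => VV b (1-x)) (𝓝[>] (0:ℝ)) (𝓝 (Sb b)) := by
  have key : Tendsto (fun x => ∑' n : ℕ, cv b n * (1-x)^n) (𝓝[>] (0:ℝ))
      (𝓝 (∑' n : ℕ, cv b n)) := by
    apply tendsto_tsum_of_dominated_convergence (bound := dd) summable_dd
    · intro n
      have : Tendsto (fun x : ℝ => cv b n * (1-x)^n) (𝓝 (0:ℝ))
          (𝓝 (cv b n * (1-0)^n)) :=
        (continuous_const.mul ((continuous_const.sub continuous_id).pow n)).tendsto 0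
      simpa using this.mono_left nhdsWithin_le_nhds
    · filter_upwards [Ioo_mem_nhdsGT_of_mem (show (0:ℝ) ∈ Ico (0:ℝ) 1 by norm_num)] with x hx
      intro n
      rw [Real.norm_eq_abs, abs_mul, abs_pow]
      calc |cv b n| * |1-x|^n ≤ dd n * 1^n := by
            apply mul_le_mul (cv_abs_le_dd hb0 hb1 n)
            · apply pow_le_pow_left₀ (abs_nonneg _)
              rw [abs_of_pos (by linarith [hx.2] : (0:ℝ) < 1-x)]
              linarith [hx.1]
            · positivity
            · cases n with
              | zero => norm_num [dd]
              | succ m =>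
                  show (0:ℝ) ≤ 1/((m:ℝ)+1)^2
                  positivity
        _ = dd n := by rw [one_pow, mul_one]
  rw [(hasSum_cv hb0 hb1).tsum_eq] at key
  exact key


lemma UV_bound (hb0 : 0 < b) (hb1 : b < 1) (hx0 : 0 < x) (hx12 : x ≤ 1/2) :
    |VV b x - UU b x| ≤ 2*x := by
  have hx1 : |x| < 1 := by rw [abs_lt]; constructor <;> linarith
  have hU := hs_U hb0 hb1 hx1
  have hV := hs_V hb0 hb1 hx1
  have hVleU : VV b x ≤ UU b x := by
    apply hasSum_le _ hV hU
    intro n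
    exact mul_le_mul_of_nonneg_right (cv_le_cu hb0 hb1 n) (by positivity)
  have hUV : HasSum (fun n : ℕ => cu b n * x^n - cv b n * x^n) (UU b x - VV b x) := hU.sub hV
  have hg : HasSum (fun n : ℕ => x^n) (1-x)⁻¹ :=
    hasSum_geometric_of_lt_one hx0.le (by linarith)
  have hione : HasSum (fun n : ℕ => if n = 0 then (1:ℝ) else 0) 1 := hasSum_ite_eq 0 1
  have hg' : HasSum (fun n : ℕ => x^n - if n = 0 then (1:ℝ) else 0) ((1-x)⁻¹ - 1) :=
    hg.sub hione
  have hle : UU b x - VV b x ≤ (1-x)⁻¹ - 1 := by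
    apply hasSum_le _ hUV hg'
    intro n
    cases n with
    | zero => simp [cu_zero, cv_zero]
    | succ m =>
        simp only [Nat.succ_ne_zero, if_false, sub_zero]
        have h1 : cu b (m+1) - cv b (m+1) ≤ 1 := cu_sub_cv_le hb0 hb1 m
        have h2 : (0:ℝ) ≤ x^(m+1) := by positivity
        nlinarith
  have hfin : (1-x)⁻¹ - 1 ≤ 2*x := by
    have h1x : (0:ℝ) < 1-x := by linarith
    rw [inv_eq_one_div, div_sub' (ne_of_gt h1x), div_le_iff₀ h1x]
    nlinarith
  rw [abs_sub_comm, abs_of_nonneg (by linarith)]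
  linarith

/-- shifted log series coefficients -/
noncomputable def ff (x : ℝ) : ℕ → ℝ :=
  fun n => match n with | 0 => 1 | (m+1) => x^(m+1)/((m:ℝ)+1)

lemma U_upper (hb0 : 0 < b) (hb1 : b < 1) (hx : x ∈ Ioo (0:ℝ) 1) :
    UU b (1-x) ≤ 1 - Real.log x ∧ 0 ≤ UU b (1-x) := by
  have hy1 : |1-x| < 1 := abs_lt_one_of_Ioo' hx
  have hU := hs_U hb0 hb1 hy1
  constructor
  · have hlog := Real.hasSum_pow_div_log_of_abs_lt_one hy1
    rw [show (1:ℝ)-(1-x) = x by ring] at hlog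
    have h2 : HasSum (fun n : ℕ => ff (1-x) (n+1)) (-Real.log x) := hlog
    have h3 := (hasSum_nat_add_iff (f := ff (1-x)) 1).mp h2
    have h3' : HasSum (ff (1-x)) (-Real.log x + 1) := by
      simpa [ff] using h3
    have hle : UU b (1-x) ≤ -Real.log x + 1 := by
      apply hasSum_le _ hU h3'
      intro n
      cases n with
      | zero =>
          rw [cu_zero, pow_zero, mul_one]
          exact le_refl _
      | succ m =>
          show cu b (m+1) * (1-x)^(m+1) ≤ (1-x)^(m+1)/((m:ℝ)+1)
          have h4 := cu_succ_le hb0 hb1 m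
          have h5 : (0:ℝ) ≤ (1-x)^(m+1) := pow_nonneg (by linarith [hx.2]) _
          calc cu b (m+1) * (1-x)^(m+1) ≤ (1/((m:ℝ)+1)) * (1-x)^(m+1) :=
                mul_le_mul_of_nonneg_right h4 h5
            _ = (1-x)^(m+1)/((m:ℝ)+1) := by ring
    linarith
  · apply hasSum_le _ hasSum_zero hU
    intro n
    have h1 := cu_pos hb0 hb1 n
    have h2 : (0:ℝ) ≤ (1-x)^n := pow_nonneg (by linarith [hx.2]) _
    exact mul_nonneg h1.le h2


lemma tendsto_T2 (hb0 : 0 < b) (hb1 : b < 1) :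
    Tendsto (fun x => (VV b x - UU b x) * UU b (1-x)) (𝓝[>] (0:ℝ)) (𝓝 0) := by
  apply squeeze_zero_norm' (a := fun x => 2*x*(1 - Real.log x))
  · filter_upwards [Ioo_mem_nhdsGT_of_mem (show (0:ℝ) ∈ Ico (0:ℝ) (1/2) by norm_num)] with x hx
    have hx01 : x ∈ Ioo (0:ℝ) 1 := ⟨hx.1, by linarith [hx.2]⟩
    have h1 := UV_bound hb0 hb1 hx.1 hx.2.le
    obtain ⟨h2, h3⟩ := U_upper hb0 hb1 hx01
    have hlog : Real.log x ≤ 0 := Real.log_nonpos hx.1.le (by linarith [hx.2])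
    rw [Real.norm_eq_abs, abs_mul, abs_of_nonneg h3]
    calc |VV b x - UU b x| * UU b (1-x) ≤ (2*x) * (1 - Real.log x) := by
          apply mul_le_mul h1 h2 h3 (by linarith [hx.1])
      _ = 2*x*(1 - Real.log x) := by ring
  · have h1 : Tendsto (fun x : ℝ => 2*x) (𝓝[>] (0:ℝ)) (𝓝 0) := by
      have hc : Continuous (fun x : ℝ => 2*x) := continuous_const.mul continuous_id
      have := hc.tendsto 0
      simp only [mul_zero] at this
      exact this.mono_left nhdsWithin_le_nhds
    have h2 : Tendsto (fun x : ℝ => Real.log x * x) (𝓝[>] (0:ℝ)) (𝓝 0) := by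
      have := tendsto_log_mul_rpow_nhdsGT_zero one_pos
      apply this.congr'
      filter_upwards [self_mem_nhdsWithin] with x hx
      rw [Real.rpow_one]
    have h3 := h1.sub (h2.const_mul 2)
    rw [show (0:ℝ) - 2*0 = 0 by ring] at h3
    apply h3.congr
    intro x
    ring

lemma Wf_tendsto (hb0 : 0 < b) (hb1 : b < 1) :
    Tendsto (Wf b) (𝓝[>] (0:ℝ)) (𝓝 (Sb b)) := by
  have h := (tendsto_T2 hb0 hb1).add ((tendsto_V1 hb0 hb1).mul (tendsto_U0 hb0 hb1))
  rw [show (0:ℝ) + Sb b * 1 = Sb b by ring] at h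
  apply h.congr
  intro y
  rw [Wf]
  ring

lemma Wf_value (hb0 : 0 < b) (hb1 : b < 1) (hx : x ∈ Ioo (0:ℝ) 1) : Wf b x = Sb b := by
  have hconst : ∀ᶠ y in 𝓝[>] (0:ℝ), Wf b y = Wf b x := by
    filter_upwards [Ioo_mem_nhdsGT_of_mem (show (0:ℝ) ∈ Ico (0:ℝ) x from ⟨le_refl 0, hx.1⟩)]
      with y hy
    exact W_eq hb0 hb1 y ⟨hy.1, lt_trans hy.2 hx.2⟩ x hx
  have h2 : Tendsto (Wf b) (𝓝[>] (0:ℝ)) (𝓝 (Wf b x)) := by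
    rw [tendsto_congr' hconst]
    exact tendsto_const_nhds
  exact tendsto_nhds_unique h2 (Wf_tendsto hb0 hb1)


end main

end LegAux

theorem generalized_legendre_relation (a r : ℝ) (ha : a ∈ Set.Ioo (0 : ℝ) 1)
    (hr : r ∈ Set.Ioo (0 : ℝ) 1) :
    genE a r * genK a (Real.sqrt (1 - r ^ 2)) + genE a (Real.sqrt (1 - r ^ 2)) * genK a r -
      genK a r * genK a (Real.sqrt (1 - r ^ 2)) =
    π * Real.sin (π * a) / (4 * (1 - a)) := by
  obtain ⟨ha0, ha1⟩ := ha
  obtain ⟨hr0, hr1⟩ := hr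
  set b : ℝ := 1 - a with hb
  have hb0 : 0 < b := by simp [hb]; linarith
  have hb1 : b < 1 := by simp [hb]; linarith
  have hsq : Real.sqrt (1 - r^2) ^ 2 = 1 - r^2 := Real.sq_sqrt (by nlinarith)
  have hx : r^2 ∈ Set.Ioo (0:ℝ) 1 := ⟨by positivity, by nlinarith⟩
  have hKu : ∀ y : ℝ, hyperF a (1-a) 1 y = ∑' n, LegAux.cu b n * y^n := by
    intro y
    apply tsum_congr
    intro n
    rw [ascPochhammer_eval_one]
    rw [LegAux.cu, show (1:ℝ) - b = a by rw [hb]; ring, show (1:ℝ) - a = b from rfl]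
  have hKv : ∀ y : ℝ, hyperF (a-1) (1-a) 1 y = ∑' n, LegAux.cv b n * y^n := by
    intro y
    apply tsum_congr
    intro n
    rw [ascPochhammer_eval_one]
    rw [LegAux.cv, show -b = a - 1 by rw [hb]; ring, show (1:ℝ) - a = b from rfl]
  have e1 : genK a r = π/2 * LegAux.UU b (r^2) := by
    rw [genK, hKu, LegAux.UU]
  have e2 : genK a (Real.sqrt (1 - r^2)) = π/2 * LegAux.UU b (1 - r^2) := by
    rw [genK, hKu, hsq, LegAux.UU]
  have e3 : genE a r = π/2 * LegAux.VV b (r^2) := by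
    rw [genE, hKv, LegAux.VV]
  have e4 : genE a (Real.sqrt (1 - r^2)) = π/2 * LegAux.VV b (1 - r^2) := by
    rw [genE, hKv, hsq, LegAux.VV]
  have hW := LegAux.Wf_value hb0 hb1 hx
  rw [LegAux.Wf, LegAux.Sb] at hW
  have hsin : Real.sin (π * b) = Real.sin (π * a) := by
    rw [hb, show π * (1 - a) = π - π * a by ring, Real.sin_pi_sub]
  rw [e1, e2, e3, e4]
  have hπ : (π:ℝ) ≠ 0 := Real.pi_ne_zero
  have hbne : b ≠ 0 := ne_of_gt hb0
  have h1a : (1:ℝ) - a ≠ 0 := by rw [← hb]; exact hbne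
  calc π/2 * LegAux.VV b (r^2) * (π/2 * LegAux.UU b (1-r^2)) +
        π/2 * LegAux.VV b (1-r^2) * (π/2 * LegAux.UU b (r^2)) -
        π/2 * LegAux.UU b (r^2) * (π/2 * LegAux.UU b (1-r^2))
      = (π/2)^2 * (LegAux.VV b (r^2) * LegAux.UU b (1-(r^2)) +
          LegAux.VV b (1-(r^2)) * LegAux.UU b (r^2) -
          LegAux.UU b (r^2) * LegAux.UU b (1-(r^2))) := by ring
    _ = (π/2)^2 * (Real.sin (π*b) / (π*b)) := by rw [hW]
    _ = π * Real.sin (π * a) / (4 * (1 - a)) := by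
        rw [hsin, hb]
        field_simp
        ring
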